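/- If α, β ∈ Σ are orthogonal roots (so the roots in ℝα + ℝβ are exactly ±α, ±β), then the operators B^α_V(λ) and B^β_V(λ) commute: B^α_V(λ) B^β_V(λ) = B^β_V(λ) B^α_V(λ) on any finite-dimensional g-module V. -/

import Mathlib

/- STATEMENT 14 (A₁×A₁-type rank-2 relation): if α, β are orthogonal roots of a simple
Lie algebra g (so that the roots lying in ℝα + ℝβ are exactly ±α, ±β), then on any
finite-dimensional g-module V the operators commute:
  B^α_V(λ) B^β_V(λ) = B^β_V(λ) B^α_V(λ)
as rational End(V)-valued functions of λ (stated on each weight space V[ν]; both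
operators act on V[ν] by `p((λ+ν/2,γ^∨)−1; H_γ, E_γ, F_γ)` and preserve weights).

`hs` is the real form of the Cartan subalgebra (an inner product space) containing the
roots; the Lie algebra g acts on V through `ρ`; `eg γ = e_γ` (normalized by
`(e_γ,e_{−γ}) = 1`, so `[e_γ, e_{−γ}] = ((γ,γ)/2) H_γ`), `hg γ = H_γ = γ^∨`,
`E_γ = (2/(γ,γ)) e_γ`, `F_γ = e_{−γ}`. -/

open scoped BigOperators RealInnerProductSpace

noncomputable section

attribute [local instance 100] LieRing.ofAssociativeRing

variable {V : Type*} [AddCommGroup V] [Module ℂ V]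

/-- `p(t; H, E, F) = Σ_k F^k E^k (1/k!) Π_{j=0}^{k-1} (t - H - j)⁻¹`, truncated at
`k = finrank ℂ V` (exact on finite-dimensional modules, where `E` is nilpotent). -/
def pEnd [FiniteDimensional ℂ V] (t : ℂ) (H E F : Module.End ℂ V) : Module.End ℂ V :=
  ∑ k ∈ Finset.range (Module.finrank ℂ V + 1),
    ((Nat.factorial k : ℂ))⁻¹ •
      (F ^ k * E ^ k *
        ((List.range k).map fun j =>
          Ring.inverse (t • (1 : Module.End ℂ V) - H - (j : ℂ) • 1)).prod)

variable {hs : Type*} [NormedAddCommGroup hs] [InnerProductSpace ℝ hs]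
variable {g : Type*} [LieRing g] [LieAlgebra ℂ g]

/-- The argument `(λ + ν/2, γ^∨) − 1` of `p` in the definition of `B^γ_V(λ)` on `V[ν]`. -/
def tval (lam nu γ : hs) : ℂ :=
  ((⟪lam + (1/2 : ℝ) • nu, (2 / ⟪γ, γ⟫ : ℝ) • γ⟫ : ℝ) : ℂ) - 1

/-- The operator `B^γ_V(λ)` on the weight space `V[ν]`:
`p((λ+ν/2,γ^∨)−1; H_γ, E_γ, F_γ)` with `H_γ = hg γ`, `E_γ = (2/(γ,γ)) e_γ`,
`F_γ = e_{−γ}`, all acting through the representation `ρ`. -/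
def Bop [FiniteDimensional ℂ V] (ρ : g →ₗ⁅ℂ⁆ Module.End ℂ V) (eg hg : hs → g)
    (lam nu γ : hs) : Module.End ℂ V :=
  pEnd (tval lam nu γ) (ρ (hg γ)) (((2 / ⟪γ, γ⟫ : ℝ) : ℂ) • ρ (eg γ)) (ρ (eg (-γ)))

/-- If `a` commutes with a ring element `b`, it commutes with `Ring.inverse b`. -/
lemma commute_ringInverse_right {M₀ : Type*} [MonoidWithZero M₀] {a b : M₀}
    (h : Commute a b) : Commute a (Ring.inverse b) := by
  by_cases hb : IsUnit b
  · obtain ⟨u, rfl⟩ := hb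
    rw [Ring.inverse_unit]
    exact h.units_inv_right
  · rw [Ring.inverse_non_unit _ hb]
    exact Commute.zero_right a

/-- Anything commuting with `H`, `E`, `F` commutes with `pEnd t H E F`. -/
lemma commute_pEnd_left [FiniteDimensional ℂ V] {t : ℂ} {H E F b : Module.End ℂ V}
    (hH : Commute H b) (hE : Commute E b) (hF : Commute F b) :
    Commute (pEnd t H E F) b := by
  unfold pEnd
  refine Commute.sum_left _ _ _ fun k _ => ?_
  refine Commute.smul_left ?_ _
  refine ((hF.pow_left k).mul_left (hE.pow_left k)).mul_left ?_
  refine Commute.list_prod_left _ _ fun x hx => ?_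
  simp only [List.mem_map, List.mem_range] at hx
  obtain ⟨j, -, rfl⟩ := hx
  refine (commute_ringInverse_right (b := t • (1 : Module.End ℂ V) - H - (j : ℂ) • 1)
    ?_).symm
  exact (((Commute.one_right b).smul_right t).sub_right hH.symm).sub_right
    ((Commute.one_right b).smul_right _)

lemma commute_pEnd [FiniteDimensional ℂ V] {t t' : ℂ} {H E F H' E' F' : Module.End ℂ V}
    (hHH : Commute H H') (hHE : Commute H E') (hHF : Commute H F')
    (hEH : Commute E H') (hEE : Commute E E') (hEF : Commute E F')
    (hFH : Commute F H') (hFE : Commute F E') (hFF : Commute F F') :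
    Commute (pEnd t H E F) (pEnd t' H' E' F') :=
  commute_pEnd_left
    (commute_pEnd_left hHH.symm hHE.symm hHF.symm).symm
    (commute_pEnd_left hEH.symm hEE.symm hEF.symm).symm
    (commute_pEnd_left hFH.symm hFE.symm hFF.symm).symm

theorem stmt14 [FiniteDimensional ℂ V]
    (ρ : g →ₗ⁅ℂ⁆ Module.End ℂ V)
    (roots : Finset hs) (hroot0 : (0 : hs) ∉ roots)
    (α β : hs) (hα : α ∈ roots) (hβ : β ∈ roots)
    (horth : ⟪α, β⟫ = (0 : ℝ))
    (hneg : ∀ γ ∈ roots, -γ ∈ roots)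
    -- the roots lying in ℝα + ℝβ are exactly ±α, ±β
    (hplane : ∀ γ ∈ roots, γ ∈ Submodule.span ℝ ({α, β} : Set hs) →
      γ = α ∨ γ = β ∨ γ = -α ∨ γ = -β)
    -- root vectors, coroots, and the structure constants of g
    (eg : hs → g) (hg : hs → g) (Nco : hs → hs → ℂ)
    (hcartan : ∀ γ δ : hs, ⁅hg γ, hg δ⁆ = 0)
    (hwt : ∀ γ δ, γ ∈ roots → δ ∈ roots →
      ⁅hg γ, eg δ⁆ = ((2 * ⟪γ, δ⟫ / ⟪γ, γ⟫ : ℝ) : ℂ) • eg δ)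
    (hee : ∀ γ δ, γ ∈ roots → δ ∈ roots → γ + δ ∈ roots →
      ⁅eg γ, eg δ⁆ = Nco γ δ • eg (γ + δ))
    (heeNR : ∀ γ δ, γ ∈ roots → δ ∈ roots → γ + δ ≠ 0 → γ + δ ∉ roots → ⁅eg γ, eg δ⁆ = 0)
    (hef : ∀ γ ∈ roots, ⁅eg γ, eg (-γ)⁆ = ((⟪γ, γ⟫ / 2 : ℝ) : ℂ) • hg γ)
    -- the weight ν and a weight vector v ∈ V[ν]
    (lam nu : hs) (v : V)
    (hv : ∀ γ ∈ roots, ρ (hg γ) v = ((2 * ⟪γ, nu⟫ / ⟪γ, γ⟫ : ℝ) : ℂ) • v)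
    -- genericity of λ
    (hgen : ∀ γ ∈ ({α, β} : Set hs), ∀ j : ℕ,
      IsUnit ((tval lam nu γ) • (1 : Module.End ℂ V) - ρ (hg γ) - (j : ℂ) • 1)) :
    (Bop ρ eg hg lam nu α * Bop ρ eg hg lam nu β) v =
    (Bop ρ eg hg lam nu β * Bop ρ eg hg lam nu α) v := by
  have hα0 : α ≠ 0 := fun h => hroot0 (h ▸ hα)
  have hβ0 : β ≠ 0 := fun h => hroot0 (h ▸ hβ)
  have hαα : ⟪α, α⟫ ≠ (0 : ℝ) := fun h => hα0 (inner_self_eq_zero.mp h)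
  have hββ : ⟪β, β⟫ ≠ (0 : ℝ) := fun h => hβ0 (inner_self_eq_zero.mp h)
  have horth' : ⟪β, α⟫ = (0 : ℝ) := by rw [real_inner_comm]; exact horth
  -- commuting in g gives commuting endomorphisms
  have hlie : ∀ x y : g, ⁅x, y⁆ = 0 → Commute (ρ x) (ρ y) := by
    intro x y h
    have h2 : ρ ⁅x, y⁆ = ⁅ρ x, ρ y⁆ := ρ.map_lie x y
    rw [h, map_zero] at h2
    exact commute_iff_lie_eq.mpr h2.symm
  -- e-e commutation across the two A₁'s
  have hegeg : ∀ γ δ : hs, (γ = α ∨ γ = -α) → (δ = β ∨ δ = -β) →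
      Commute (ρ (eg γ)) (ρ (eg δ)) := by
    intro γ δ h1 h2
    have hγr : γ ∈ roots := by rcases h1 with rfl | rfl; exact hα; exact hneg _ hα
    have hδr : δ ∈ roots := by rcases h2 with rfl | rfl; exact hβ; exact hneg _ hβ
    have hβδ : ⟪β, δ⟫ ≠ (0 : ℝ) := by
      rcases h2 with rfl | rfl <;> simp [inner_neg_right, hββ, hβ0]
    have hαγ : ⟪α, γ⟫ ≠ (0 : ℝ) := by
      rcases h1 with rfl | rfl <;> simp [inner_neg_right, hαα, hα0]
    have hβγ : ⟪β, γ⟫ = (0 : ℝ) := by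
      rcases h1 with rfl | rfl <;> simp [inner_neg_right, horth']
    have hαδ : ⟪α, δ⟫ = (0 : ℝ) := by
      rcases h2 with rfl | rfl <;> simp [inner_neg_right, horth]
    have hsum0 : γ + δ ≠ 0 := by
      intro h
      have : ⟪β, γ + δ⟫ = (0 : ℝ) := by rw [h, inner_zero_right]
      rw [inner_add_right, hβγ, zero_add] at this
      exact hβδ this
    have hsumnr : γ + δ ∉ roots := by
      intro hmem
      have hspan : γ + δ ∈ Submodule.span ℝ ({α, β} : Set hs) := by
        have hαs : α ∈ Submodule.span ℝ ({α, β} : Set hs) :=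
          Submodule.subset_span (by simp)
        have hβs : β ∈ Submodule.span ℝ ({α, β} : Set hs) :=
          Submodule.subset_span (by simp)
        refine Submodule.add_mem _ ?_ ?_
        · rcases h1 with rfl | rfl; exact hαs; exact Submodule.neg_mem _ hαs
        · rcases h2 with rfl | rfl; exact hβs; exact Submodule.neg_mem _ hβs
      rcases hplane _ hmem hspan with h | h | h | h
      · have : ⟪β, γ + δ⟫ = (0 : ℝ) := by rw [h, horth']
        rw [inner_add_right, hβγ, zero_add] at this
        exact hβδ this
      · have : ⟪α, γ + δ⟫ = (0 : ℝ) := by rw [h, horth]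
        rw [inner_add_right, hαδ, add_zero] at this
        exact hαγ this
      · have : ⟪β, γ + δ⟫ = (0 : ℝ) := by rw [h, inner_neg_right, horth', neg_zero]
        rw [inner_add_right, hβγ, zero_add] at this
        exact hβδ this
      · have : ⟪α, γ + δ⟫ = (0 : ℝ) := by rw [h, inner_neg_right, horth, neg_zero]
        rw [inner_add_right, hαδ, add_zero] at this
        exact hαγ this
    exact hlie _ _ (heeNR γ δ hγr hδr hsum0 hsumnr)
  -- h-e commutation
  have hhge : ∀ γ δ : hs, γ ∈ roots → δ ∈ roots → ⟪γ, δ⟫ = (0 : ℝ) →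
      Commute (ρ (hg γ)) (ρ (eg δ)) := by
    intro γ δ hγ hδ h0
    refine hlie _ _ ?_
    rw [hwt γ δ hγ hδ, h0]
    norm_num
  have hαmβ : ⟪α, -β⟫ = (0 : ℝ) := by rw [inner_neg_right, horth, neg_zero]
  have hβmα : ⟪β, -α⟫ = (0 : ℝ) := by rw [inner_neg_right, horth', neg_zero]
  have key : Commute (Bop ρ eg hg lam nu α) (Bop ρ eg hg lam nu β) := by
    unfold Bop
    refine commute_pEnd ?_ ?_ ?_ ?_ ?_ ?_ ?_ ?_ ?_
    · exact hlie _ _ (hcartan α β)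
    · exact Commute.smul_right (hhge α β hα hβ horth) _
    · exact hhge α (-β) hα (hneg _ hβ) hαmβ
    · exact Commute.smul_left ((hhge β α hβ hα horth').symm) _
    · exact Commute.smul_left (Commute.smul_right (hegeg α β (Or.inl rfl) (Or.inl rfl)) _) _
    · exact Commute.smul_left (hegeg α (-β) (Or.inl rfl) (Or.inr rfl)) _
    · exact (hhge β (-α) hβ (hneg _ hα) hβmα).symm
    · exact Commute.smul_right (hegeg (-α) β (Or.inr rfl) (Or.inl rfl)) _
    · exact hegeg (-α) (-β) (Or.inr rfl) (Or.inr rfl)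
  rw [key.eq]

end
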